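/- (ε-log-lift implies a 2ε differential-privacy-style guarantee on posteriors.) Let S and Y be finite nonempty sets and p a joint probability mass function on S × Y with p(s,y) > 0 for all (s,y). If ε ≥ 0 and |log(p(s,y)/(p(s)p(y)))| ≤ ε for all s ∈ S, y ∈ Y, then for every s ∈ S and every y, y' ∈ Y the posteriors p(s|y) = p(s,y)/p(y) satisfy p(s|y) ≤ e^{2ε} · p(s|y'). -/
import Mathlib

/-- ε-log-lift implies a 2ε differential-privacy-style guarantee
on posteriors: if `|log(p(s,y)/(p(s)p(y)))| ≤ ε` for all `s, y`, then
`p(s|y) ≤ e^{2ε} p(s|y')` for all `s, y, y'`, where `p(s|y) = p(s,y)/p(y)`. -/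
theorem stmt_15 {S Y : Type*} [Fintype S] [Fintype Y] [Nonempty S] [Nonempty Y]
    (p : S → Y → ℝ)
    (hp_pos : ∀ s y, 0 < p s y)
    (hp_sum : ∑ s, ∑ y, p s y = 1)
    (pS : S → ℝ) (hpS : ∀ s, pS s = ∑ y, p s y)
    (pY : Y → ℝ) (hpY : ∀ y, pY y = ∑ s, p s y)
    (ε : ℝ) (hε : 0 ≤ ε)
    (hlift : ∀ s y, |Real.log (p s y / (pS s * pY y))| ≤ ε) :
    ∀ s : S, ∀ y y' : Y,
      p s y / pY y ≤ Real.exp (2 * ε) * (p s y' / pY y') := by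
  intro s y y'
  have hpS_pos : ∀ s, 0 < pS s := fun s => by
    rw [hpS]; exact Finset.sum_pos (fun y _ => hp_pos s y) Finset.univ_nonempty
  have hpY_pos : ∀ y, 0 < pY y := fun y => by
    rw [hpY]; exact Finset.sum_pos (fun s _ => hp_pos s y) Finset.univ_nonempty
  have hratio_pos : ∀ s y, 0 < p s y / (pS s * pY y) := fun s y =>
    div_pos (hp_pos s y) (mul_pos (hpS_pos s) (hpY_pos y))
  have h1 : p s y / (pS s * pY y) ≤ Real.exp ε := by
    have := (abs_le.mp (hlift s y)).2
    calc p s y / (pS s * pY y) = Real.exp (Real.log (p s y / (pS s * pY y))) := by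
          rw [Real.exp_log (hratio_pos s y)]
      _ ≤ Real.exp ε := Real.exp_le_exp.mpr this
  have h2 : Real.exp (-ε) ≤ p s y' / (pS s * pY y') := by
    have := (abs_le.mp (hlift s y')).1
    calc Real.exp (-ε) ≤ Real.exp (Real.log (p s y' / (pS s * pY y'))) :=
          Real.exp_le_exp.mpr this
      _ = p s y' / (pS s * pY y') := Real.exp_log (hratio_pos s y')
  have hA : p s y / pY y ≤ Real.exp ε * pS s := by
    have := h1
    rw [div_le_iff₀ (mul_pos (hpS_pos s) (hpY_pos y))] at this
    rw [div_le_iff₀ (hpY_pos y)]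
    nlinarith [hpS_pos s, hpY_pos y]
  have hB : Real.exp (-ε) * pS s ≤ p s y' / pY y' := by
    rw [le_div_iff₀ (mul_pos (hpS_pos s) (hpY_pos y'))] at h2
    rw [le_div_iff₀ (hpY_pos y')]
    nlinarith [hpS_pos s, hpY_pos y']
  calc p s y / pY y ≤ Real.exp ε * pS s := hA
    _ = Real.exp (2 * ε) * (Real.exp (-ε) * pS s) := by
        rw [← mul_assoc, ← Real.exp_add]; ring_nf
    _ ≤ Real.exp (2 * ε) * (p s y' / pY y') := by
        exact mul_le_mul_of_nonneg_left hB (Real.exp_pos _).le
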